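/- If 0 < x_1 < x_2 < ... < x_{n+1} < 1, then for every 1 ≤ i ≤ n+1 and 1 ≤ j ≤ n+1 with i+j-1 ≤ n+1, the minor of the Bernstein–Vandermonde matrix taken with rows i,...,i+j-1 and columns 1,...,j is strictly positive. -/

import Mathlib

/-- If 0 < x_1 < ... < x_{n+1} < 1, every minor of the Bernstein–Vandermonde matrix
with consecutive rows i,...,i+j-1 and initial consecutive columns 1,...,j is positive. -/
theorem bernstein_vandermonde_minor_pos (n i j : ℕ) (x : ℕ → ℝ)
    (hx : ∀ k, 1 ≤ k → k ≤ n + 1 → 0 < x k ∧ x k < 1)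
    (hmono : ∀ k l, 1 ≤ k → k < l → l ≤ n + 1 → x k < x l)
    (hi : 1 ≤ i) (hj : 1 ≤ j) (hij : i + j ≤ n + 2) :
    0 < (Matrix.of fun r c : Fin j =>
        (n.choose c : ℝ) * (1 - x (i + r)) ^ (n - (c : ℕ)) * x (i + r) ^ (c : ℕ)).det := by
  have hxr : ∀ r : Fin j, 0 < x (i + r) ∧ x (i + r) < 1 := fun r => hx _ (by omega)
    (by have := r.isLt; omega)
  have h1x : ∀ r : Fin j, 0 < 1 - x (i + r) := fun r => by
    have := (hxr r).2; linarith
  set t : Fin j → ℝ := fun r => x (i + r) / (1 - x (i + r)) with ht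
  have key : (Matrix.of fun r c : Fin j =>
        (n.choose c : ℝ) * (1 - x (i + r)) ^ (n - (c : ℕ)) * x (i + r) ^ (c : ℕ)) =
      Matrix.of fun r c : Fin j =>
        (1 - x (i + r)) ^ n * ((fun c : Fin j => (n.choose c : ℝ)) c
          * (Matrix.vandermonde t) r c) := by
    ext r c
    simp only [Matrix.of_apply, Matrix.vandermonde_apply, ht]
    have hcn : (c : ℕ) ≤ n := by have := c.isLt; omega
    have hne : (1 - x (i + r)) ≠ 0 := ne_of_gt (h1x r)
    have hp : (1 - x (i + r)) ^ (n - (c:ℕ)) * (1 - x (i + r)) ^ (c:ℕ) = (1 - x (i + r)) ^ n :=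
      pow_sub_mul_pow _ hcn
    rw [div_pow, ← hp]
    field_simp
  rw [key]
  rw [show (Matrix.of fun r c : Fin j =>
        (1 - x (i + r)) ^ n * ((fun c : Fin j => (n.choose c : ℝ)) c
          * (Matrix.vandermonde t) r c)) =
      Matrix.of fun r c : Fin j => (fun r : Fin j => (1 - x (i + r)) ^ n) r *
        (Matrix.of fun r c : Fin j => (fun c : Fin j => (n.choose c : ℝ)) c
          * (Matrix.vandermonde t) r c) r c from rfl]
  rw [Matrix.det_mul_column, Matrix.det_mul_row, Matrix.det_vandermonde]
  apply mul_pos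
  · apply Finset.prod_pos
    intro r _
    exact pow_pos (h1x r) n
  apply mul_pos
  · apply Finset.prod_pos
    intro c _
    have hcn : (c : ℕ) ≤ n := by have := c.isLt; omega
    exact_mod_cast Nat.choose_pos hcn
  · apply Finset.prod_pos
    intro r _
    apply Finset.prod_pos
    intro s hs
    have hrs : r < s := Finset.mem_Ioi.mp hs
    have hxlt : x (i + r) < x (i + s) := by
      apply hmono
      · omega
      · omega
      · have := s.isLt; omega
    have h1 := h1x r
    have h2 := h1x s
    have htlt : t r < t s := by
      simp only [ht]
      rw [div_lt_div_iff₀ h1 h2]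
      nlinarith
    linarith
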